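/- Let K and G₀ be abelian groups and let η : G₀ → G₀ be a group endomorphism such that id − η is bijective. Let D = (⊕_{n ∈ ℤ} K) ⊕ G₀, where ⊕_{n ∈ ℤ} K denotes finitely supported functions ℤ → K, let σ be the left shift on ⊕_{n ∈ ℤ} K given by σ(ξ)ₙ = ξ_{n+1}, and let α : D → D be the endomorphism α(ξ, f) = (σ(ξ), η(f)). Define Σ₀ : D → K by Σ₀(ξ, f) = Σ_{n ∈ ℤ} ξₙ. Then: (a) id − α is injective; (b) the image of id − α equals the kernel of Σ₀; and (c) Σ₀ is surjective. Consequently Σ₀ induces a group isomorphism D/(id − α)(D) ≅ K. -/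
import Mathlib


/-- Algebraic core of Lemma 4.2(iv) and (vi): with `D = (⊕_{n ∈ ℤ} K) ⊕ G₀`,
`α(ξ, f) = (σ ξ, η f)` (σ the left shift) and `Σ₀(ξ, f) = Σₙ ξₙ`, the map `id − α` is
injective, its image is the kernel of `Σ₀`, and `Σ₀` is surjective; consequently `Σ₀`
induces an isomorphism `D/(id − α)(D) ≅ K`. -/
theorem stmt_8 {K G₀ : Type*} [AddCommGroup K] [AddCommGroup G₀]
    (η : G₀ →+ G₀) (hη : Function.Bijective (fun g : G₀ => g - η g))
    (α : ((ℤ →₀ K) × G₀) →+ ((ℤ →₀ K) × G₀))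
    (hα₁ : ∀ (x : (ℤ →₀ K) × G₀) (n : ℤ), (α x).1 n = x.1 (n + 1))
    (hα₂ : ∀ x : (ℤ →₀ K) × G₀, (α x).2 = η x.2)
    (sum₀ : ((ℤ →₀ K) × G₀) →+ K)
    (hsum₀ : ∀ x : (ℤ →₀ K) × G₀, sum₀ x = x.1.sum fun _ k => k) :
    Function.Injective (fun x : (ℤ →₀ K) × G₀ => x - α x) ∧
    (∀ x : (ℤ →₀ K) × G₀, (∃ y : (ℤ →₀ K) × G₀, y - α y = x) ↔ sum₀ x = 0) ∧
    Function.Surjective sum₀ ∧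
    ∃ e : (((ℤ →₀ K) × G₀) ⧸ (AddMonoidHom.id ((ℤ →₀ K) × G₀) - α).range) ≃+ K,
      ∀ x : (ℤ →₀ K) × G₀, e (QuotientAddGroup.mk x) = sum₀ x := by
  classical
  -- sum₀ is α-invariant
  have hsumα : ∀ y : (ℤ →₀ K) × G₀, sum₀ (α y) = sum₀ y := by
    intro y
    have h1 : (α y).1 = Finsupp.equivMapDomain (Equiv.subRight (1:ℤ)) y.1 := by
      ext n
      rw [Finsupp.equivMapDomain_apply, hα₁]
      simp [Equiv.subRight]
    rw [hsum₀, hsum₀, h1, Finsupp.equivMapDomain_eq_mapDomain,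
      Finsupp.sum_mapDomain_index_inj (Equiv.subRight (1:ℤ)).injective]
  -- injectivity
  have hker0 : ∀ x : (ℤ →₀ K) × G₀, x - α x = 0 → x = 0 := by
    intro x hx
    have hηinj := hη.1
    have h1 : ∀ n, x.1 n = x.1 (n + 1) := by
      intro n
      have h := congrArg (fun z : (ℤ →₀ K) × G₀ => z.1 n) hx
      simp only [Prod.fst_sub, Prod.fst_zero, Finsupp.sub_apply, Finsupp.coe_zero,
        Pi.zero_apply, sub_eq_zero, hα₁] at h
      exact h
    have hconst' : ∀ (n : ℤ) (k : ℕ), x.1 n = x.1 (n + k) := by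
      intro n k
      induction k with
      | zero => simp
      | succ k ih =>
        have hcast : (n + ((k : ℤ) + 1)) = n + k + 1 := by ring
        push_cast
        rw [hcast, ih, h1 (n + k)]
    have hconst : ∀ n m : ℤ, n ≤ m → x.1 n = x.1 m := by
      intro n m hnm
      have h := hconst' n (m - n).toNat
      rwa [show (n + ((m - n).toNat : ℤ)) = m by omega] at h
    have hx1 : x.1 = 0 := by
      ext n
      obtain ⟨m, hm, hms⟩ := (Set.Ici_infinite n).exists_notMem_finset x.1.support
      rw [hconst n m hm, Finsupp.notMem_support_iff.1 hms, Finsupp.coe_zero, Pi.zero_apply]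
    have hx2 : x.2 = 0 := by
      have h := congrArg Prod.snd hx
      simp only [Prod.snd_sub, Prod.snd_zero, hα₂, sub_eq_zero] at h
      have : x.2 - η x.2 = (0 : G₀) - η 0 := by simp [sub_eq_zero.2 h]
      exact hηinj this
    exact Prod.ext hx1 hx2
  have hinj : Function.Injective (fun x : (ℤ →₀ K) × G₀ => x - α x) := by
    intro a b hab
    have : (a - b) - α (a - b) = 0 := by
      simp only at hab
      rw [map_sub, sub_sub_sub_comm, hab, sub_self]
    have := hker0 _ this
    exact sub_eq_zero.1 this
  -- range characterization
  have hrange : ∀ x : (ℤ →₀ K) × G₀, (∃ y : (ℤ →₀ K) × G₀, y - α y = x) ↔ sum₀ x = 0 := by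
    intro x
    constructor
    · rintro ⟨y, rfl⟩
      rw [map_sub, hsumα, sub_self]
    · intro hx
      obtain ⟨w, hw⟩ := hη.2 x.2
      set s := x.1.support with hs
      set g : ℤ → K := fun n => ∑ m ∈ s.filter (fun m => n ≤ m), x.1 m with hg
      have hsum_s : ∑ m ∈ s, x.1 m = 0 := by
        rw [hsum₀] at hx; exact hx
      have hg_zero_hi : ∀ n, (∀ m ∈ s, m < n) → g n = 0 := by
        intro n hn
        have : s.filter (fun m => n ≤ m) = ∅ := by
          refine Finset.filter_false_of_mem fun m hm => ?_
          exact not_le.2 (hn m hm)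
        simp [hg, this]
      have hg_zero_lo : ∀ n, (∀ m ∈ s, n ≤ m) → g n = 0 := by
        intro n hn
        have : s.filter (fun m => n ≤ m) = s :=
          Finset.filter_true_of_mem hn
        simp [hg, this, hsum_s]
      have hfin : (Function.support g).Finite := by
        rcases s.eq_empty_or_nonempty with h | h
        · have : Function.support g = ∅ := by
            ext n
            simp only [Function.mem_support, Set.mem_empty_iff_false, iff_false, not_not]
            exact hg_zero_hi n (by simp [h])
          simp [this]
        · apply Set.Finite.subset (Set.finite_Ioc (s.min' h) (s.max' h))
          intro n hn
          simp only [Function.mem_support] at hn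
          constructor
          · by_contra hlt
            exact hn (hg_zero_lo n fun m hm => le_trans (not_lt.1 hlt) (s.min'_le m hm))
          · by_contra hlt
            exact hn (hg_zero_hi n fun m hm =>
              lt_of_le_of_lt (s.le_max' m hm) (not_le.1 hlt))
      set ξ : ℤ →₀ K := Finsupp.ofSupportFinite g hfin with hξ
      have hξ_coe : ∀ n, ξ n = g n := fun n => rfl
      have hstep : ∀ n : ℤ, g n - g (n + 1) = x.1 n := by
        intro n
        have hsplit : (s.filter (fun m => n ≤ m)).filter (fun m => n + 1 ≤ m) =
            s.filter (fun m => n + 1 ≤ m) := by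
          rw [Finset.filter_filter]
          exact Finset.filter_congr fun m _ => by constructor <;> intro h <;> omega
        have hsplit2 : (s.filter (fun m => n ≤ m)).filter (fun m => ¬ (n + 1 ≤ m)) =
            s.filter (fun m => m = n) := by
          rw [Finset.filter_filter]
          exact Finset.filter_congr fun m _ => by constructor <;> intro h <;> omega
        have hkey := Finset.sum_filter_add_sum_filter_not
          (s.filter (fun m => n ≤ m)) (fun m => n + 1 ≤ m) (fun m => x.1 m)
        rw [hsplit, hsplit2] at hkey
        have hsingle : ∑ m ∈ s.filter (fun m => m = n), x.1 m = x.1 n := by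
          rw [Finset.sum_filter, Finset.sum_ite_eq' s n (fun m => x.1 m)]
          by_cases hn : n ∈ s
          · simp [hn]
          · simp [hn, Finsupp.notMem_support_iff.1 (hs ▸ hn)]
        rw [hsingle] at hkey
        have hgn : g n = ∑ m ∈ Finset.filter (fun m => n ≤ m) s, x.1 m := rfl
        have hgn1 : g (n + 1) = ∑ m ∈ Finset.filter (fun m => n + 1 ≤ m) s, x.1 m := rfl
        rw [hgn, hgn1, ← hkey]
        abel
      refine ⟨(ξ, w), ?_⟩
      have hfst : ((ξ, w) - α (ξ, w)).1 = x.1 := by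
        ext n
        rw [Prod.fst_sub, Finsupp.sub_apply, hα₁]
        show g n - g (n + 1) = x.1 n
        exact hstep n
      have hsnd : ((ξ, w) - α (ξ, w)).2 = x.2 := by
        rw [Prod.snd_sub, hα₂]
        exact hw
      exact Prod.ext hfst hsnd
  -- surjectivity
  have hsurj : Function.Surjective sum₀ := by
    intro k
    refine ⟨(Finsupp.single 0 k, 0), ?_⟩
    rw [hsum₀]
    simp [Finsupp.sum_single_index]
  refine ⟨hinj, hrange, hsurj, ?_⟩
  have hkereq : (AddMonoidHom.id ((ℤ →₀ K) × G₀) - α).range = sum₀.ker := by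
    ext x
    simp only [AddMonoidHom.mem_range, AddMonoidHom.mem_ker, AddMonoidHom.sub_apply,
      AddMonoidHom.id_apply]
    exact hrange x
  refine ⟨(QuotientAddGroup.quotientAddEquivOfEq hkereq).trans
    (QuotientAddGroup.quotientKerEquivOfSurjective sum₀ hsurj), fun x => ?_⟩
  rfl
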